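/- Let X and Y be random variables taking finitely many values, with Y taking values y₁, …, y_K. Then E[max{X − η, 0}] ≤ E[max{Y − η, 0}] holds for all η ∈ ℝ if and only if it holds for η ∈ {y₁, …, y_K}. -/

import Mathlib

/-- Convexity (chord bound) for `u ↦ max (c - u) 0`. -/
private lemma chord_le {a b η c t s : ℝ} (ht : 0 ≤ t) (hs : 0 ≤ s)
    (hts : t + s = 1) (hη : t * a + s * b = η) :
    max (c - η) 0 ≤ t * max (c - a) 0 + s * max (c - b) 0 := by
  have h1 : c - a ≤ max (c - a) 0 := le_max_left _ _
  have h2 : c - b ≤ max (c - b) 0 := le_max_left _ _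
  have h1' : (0:ℝ) ≤ max (c - a) 0 := le_max_right _ _
  have h2' : (0:ℝ) ≤ max (c - b) 0 := le_max_right _ _
  rcases le_or_gt c η with h | h
  · rw [max_eq_right (by linarith : c - η ≤ 0)]
    exact add_nonneg (mul_nonneg ht h1') (mul_nonneg hs h2')
  · rw [max_eq_left (by linarith : (0:ℝ) ≤ c - η)]
    have e : t * (c - a) + s * (c - b) = c - η := by
      linear_combination c * hts - hη
    have := add_le_add (mul_le_mul_of_nonneg_left h1 ht)
      (mul_le_mul_of_nonneg_left h2 hs)
    linarith

/-- Reverse chord bound when `c` is outside the open interval `(a, b)`. -/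
private lemma chord_ge {a b η c t s : ℝ} (ht : 0 ≤ t) (hs : 0 ≤ s)
    (hts : t + s = 1) (hη : t * a + s * b = η)
    (haη : a ≤ η) (hηb : η ≤ b) (hc : c ≤ a ∨ b ≤ c) :
    t * max (c - a) 0 + s * max (c - b) 0 ≤ max (c - η) 0 := by
  rcases hc with hc | hc
  · rw [max_eq_right (by linarith : c - a ≤ 0),
      max_eq_right (by linarith : c - b ≤ 0)]
    simpa using le_max_right (c - η) 0
  · rw [max_eq_left (by linarith : (0:ℝ) ≤ c - a),
      max_eq_left (by linarith : (0:ℝ) ≤ c - b),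
      max_eq_left (by linarith : (0:ℝ) ≤ c - η)]
    have : t * (c - a) + s * (c - b) = c - η := by
      linear_combination c * hts - hη
    linarith

/-- On a finite probability space, the expected-excess (second-order
dominance) inequalities hold for all thresholds `η ∈ ℝ` iff they hold at the
finitely many values `y j` taken by the benchmark `Y`. -/
theorem stmt_6 {K : ℕ} (p : Fin K → ℝ) (hp : ∀ k, 0 ≤ p k)
    (hps : ∑ k, p k = 1) (x y : Fin K → ℝ) :
    (∀ η : ℝ, ∑ k, p k * max (x k - η) 0 ≤ ∑ k, p k * max (y k - η) 0) ↔
    (∀ j, ∑ k, p k * max (x k - y j) 0 ≤ ∑ k, p k * max (y k - y j) 0) := by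
  constructor
  · intro h j
    exact h (y j)
  · intro h η
    by_cases hK : K = 0
    · subst hK; simp
    have hne : (Finset.univ : Finset (Fin K)).Nonempty :=
      ⟨⟨0, Nat.pos_of_ne_zero hK⟩, Finset.mem_univ _⟩
    by_cases hlow : ∀ k, η < y k
    -- Case 1: η is below all values of y
    · obtain ⟨j0, _, hj0⟩ := Finset.exists_min_image Finset.univ y hne
      set m := y j0 with hm
      have step1 : ∀ k, max (x k - η) 0 ≤ max (x k - m) 0 + (m - η) := by
        intro k
        have h1 : η < m := hlow j0
        rcases le_or_gt (x k) η with hx | hx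
        · rw [max_eq_right (by linarith : x k - η ≤ 0)]
          have := le_max_right (x k - m) 0
          linarith
        · rw [max_eq_left (by linarith : (0:ℝ) ≤ x k - η)]
          have := le_max_left (x k - m) 0
          linarith
      calc ∑ k, p k * max (x k - η) 0
          ≤ ∑ k, p k * (max (x k - m) 0 + (m - η)) :=
            Finset.sum_le_sum fun k _ =>
              mul_le_mul_of_nonneg_left (step1 k) (hp k)
        _ = ∑ k, p k * max (x k - m) 0 + (m - η) := by
            simp only [mul_add, Finset.sum_add_distrib, ← Finset.sum_mul, hps,
              one_mul]
        _ ≤ ∑ k, p k * max (y k - m) 0 + (m - η) := by linarith [h j0]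
        _ = ∑ k, p k * (max (y k - m) 0 + (m - η)) := by
            simp only [mul_add, Finset.sum_add_distrib, ← Finset.sum_mul, hps,
              one_mul]
        _ = ∑ k, p k * max (y k - η) 0 := by
            refine Finset.sum_congr rfl fun k _ => ?_
            have h1 : m ≤ y k := hj0 k (Finset.mem_univ k)
            have h2 : η < y k := hlow k
            rw [max_eq_left (by linarith : (0:ℝ) ≤ y k - m),
              max_eq_left (by linarith : (0:ℝ) ≤ y k - η)]
            ring
    · push_neg at hlow
      by_cases hhigh : ∀ k, y k ≤ η
      -- Case 2: η is above all values of y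
      · obtain ⟨jM, _, hjM⟩ := Finset.exists_max_image Finset.univ y hne
        have hgη : ∑ k, p k * max (y k - η) 0 = 0 :=
          Finset.sum_eq_zero fun k _ => by
            rw [max_eq_right (by linarith [hhigh k] : y k - η ≤ 0)]; ring
        have hgM : ∑ k, p k * max (y k - y jM) 0 = 0 :=
          Finset.sum_eq_zero fun k _ => by
            rw [max_eq_right
              (by linarith [hjM k (Finset.mem_univ k)] : y k - y jM ≤ 0)]
            ring
        have c1 : ∑ k, p k * max (x k - η) 0 ≤ ∑ k, p k * max (x k - y jM) 0 :=
          Finset.sum_le_sum fun k _ =>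
            mul_le_mul_of_nonneg_left
              (max_le_max (by linarith [hhigh jM]) le_rfl) (hp k)
        have := h jM
        rw [hgη]
        linarith
      -- Case 3: η lies strictly between some values of y
      · push_neg at hhigh
        obtain ⟨ja, hja⟩ := hlow
        obtain ⟨jb, hjb⟩ := hhigh
        have hA : ((Finset.univ : Finset (Fin K)).filter
            fun j => y j ≤ η).Nonempty :=
          ⟨ja, Finset.mem_filter.2 ⟨Finset.mem_univ _, hja⟩⟩
        have hB : ((Finset.univ : Finset (Fin K)).filter
            fun j => η < y j).Nonempty :=
          ⟨jb, Finset.mem_filter.2 ⟨Finset.mem_univ _, hjb⟩⟩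
        obtain ⟨ia, hiaA, hia⟩ := Finset.exists_max_image _ y hA
        obtain ⟨ib, hibB, hib⟩ := Finset.exists_min_image _ y hB
        set a := y ia with ha
        set b := y ib with hb
        have haη : a ≤ η := (Finset.mem_filter.1 hiaA).2
        have hηb : η < b := (Finset.mem_filter.1 hibB).2
        have hab : a < b := lt_of_le_of_lt haη hηb
        set t := (b - η) / (b - a) with htdef
        set s := (η - a) / (b - a) with hsdef
        have hba : (0:ℝ) < b - a := by linarith
        have ht : 0 ≤ t := div_nonneg (by linarith) (by linarith)
        have hs : 0 ≤ s := div_nonneg (by linarith) (by linarith)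
        have hts : t + s = 1 := by
          rw [htdef, hsdef]
          field_simp
          ring
        have hηeq : t * a + s * b = η := by
          rw [htdef, hsdef]
          field_simp
          ring
        have hc : ∀ k, y k ≤ a ∨ b ≤ y k := by
          intro k
          rcases le_or_gt (y k) η with hk | hk
          · exact Or.inl (hia k (Finset.mem_filter.2 ⟨Finset.mem_univ _, hk⟩))
          · exact Or.inr (hib k (Finset.mem_filter.2 ⟨Finset.mem_univ _, hk⟩))
        calc ∑ k, p k * max (x k - η) 0
            ≤ ∑ k, p k * (t * max (x k - a) 0 + s * max (x k - b) 0) :=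
              Finset.sum_le_sum fun k _ =>
                mul_le_mul_of_nonneg_left (chord_le ht hs hts hηeq) (hp k)
          _ = t * (∑ k, p k * max (x k - a) 0)
              + s * (∑ k, p k * max (x k - b) 0) := by
              rw [Finset.mul_sum, Finset.mul_sum, ← Finset.sum_add_distrib]
              exact Finset.sum_congr rfl fun k _ => by ring
          _ ≤ t * (∑ k, p k * max (y k - a) 0)
              + s * (∑ k, p k * max (y k - b) 0) :=
              add_le_add (mul_le_mul_of_nonneg_left (h ia) ht)
                (mul_le_mul_of_nonneg_left (h ib) hs)
          _ = ∑ k, p k * (t * max (y k - a) 0 + s * max (y k - b) 0) := by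
              rw [Finset.mul_sum, Finset.mul_sum, ← Finset.sum_add_distrib]
              exact Finset.sum_congr rfl fun k _ => by ring
          _ ≤ ∑ k, p k * max (y k - η) 0 :=
              Finset.sum_le_sum fun k _ =>
                mul_le_mul_of_nonneg_left
                  (chord_ge ht hs hts hηeq haη (le_of_lt hηb) (hc k)) (hp k)
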